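/- arXiv:2502.00120 — 2 statements merged into one kernel-verified Lean document; each statement's English description precedes it below -/
import Mathlib

section
/- Let F̂_j(t) = ∫_0^t Ŝ(s) dΛ̂_j(s) and F_j(t) = ∫_0^t S(s) dΛ_j(s), where Ŝ = exp(-Λ̂_1 - Λ̂_2) and S = exp(-Λ_1 - Λ_2). Then F̂_j(t) - F_j(t) = Σ_{i=1,2} ∫_0^t S(s) · [1(i=j) + (F̂_j(s) - F̂_j(t))/Ŝ(s)] d[Λ̂_i(s) - Λ_i(s)]. -/
open MeasureTheory intervalIntegral

open Set
lemma fubini_tri (g Q : ℝ → ℝ) (t : ℝ) (ht : 0 ≤ t)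
    (hg : ∀ s, IntervalIntegrable g volume 0 s)
    (hQ : ∀ s, IntervalIntegrable Q volume 0 s) :
    ∫ s in (0:ℝ)..t, (∫ u in (0:ℝ)..s, g u) * Q s
      = ∫ u in (0:ℝ)..t, g u * (∫ s in u..t, Q s) := by
  have hgt : IntegrableOn g (Ioc 0 t) volume :=
    (intervalIntegrable_iff_integrableOn_Ioc_of_le ht).mp (hg t)
  have hQt : IntegrableOn Q (Ioc 0 t) volume :=
    (intervalIntegrable_iff_integrableOn_Ioc_of_le ht).mp (hQ t)
  set μ := volume.restrict (Ioc (0:ℝ) t) with hμ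
  set W : ℝ × ℝ → ℝ := {p : ℝ × ℝ | p.2 ≤ p.1}.indicator (fun p => Q p.1 * g p.2) with hW
  have hWmeas : MeasurableSet {p : ℝ × ℝ | p.2 ≤ p.1} :=
    measurableSet_le measurable_snd measurable_fst
  have hWint : Integrable W (μ.prod μ) := by
    exact (Integrable.mul_prod hQt hgt).indicator hWmeas
  have key : ∫ s, (∫ u, W (s, u) ∂μ) ∂μ = ∫ u, (∫ s, W (s, u) ∂μ) ∂μ := by
    exact (integral_integral_swap (f := fun s u => W (s, u)) hWint)
  rw [integral_of_le ht, integral_of_le ht]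
  calc ∫ s in Ioc (0:ℝ) t, (∫ u in (0:ℝ)..s, g u) * Q s
      = ∫ s, (∫ u, W (s, u) ∂μ) ∂μ := by
        refine setIntegral_congr_fun measurableSet_Ioc (fun s hs => ?_)
        have h1 : (fun u => W (s, u)) = (Iic s).indicator (fun u => Q s * g u) := by
          funext u
          simp only [hW, indicator, mem_setOf_eq, mem_Iic]
        rw [h1, hμ, setIntegral_indicator measurableSet_Iic]
        have h2 : Ioc 0 t ∩ Iic s = Ioc 0 s := by
          ext u; simp only [mem_inter_iff, mem_Iic, mem_Ioc]
          exact ⟨fun ⟨⟨a, _⟩, b⟩ => ⟨a, b⟩, fun ⟨a, b⟩ => ⟨⟨a, b.trans hs.2⟩, b⟩⟩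
        rw [h2, integral_of_le hs.1.le, MeasureTheory.integral_const_mul, mul_comm]
  _ = ∫ u, (∫ s, W (s, u) ∂μ) ∂μ := key
  _ = ∫ u in Ioc (0:ℝ) t, g u * (∫ s in u..t, Q s) := by
        refine setIntegral_congr_fun measurableSet_Ioc (fun u hu => ?_)
        have h1 : (fun s => W (s, u)) = (Ici u).indicator (fun s => Q s * g u) := by
          funext s
          simp only [hW, indicator, mem_setOf_eq, mem_Ici]
        rw [h1, hμ, setIntegral_indicator measurableSet_Ici]
        have h2 : Ioc 0 t ∩ Ici u = Icc u t := by
          ext s; simp only [mem_inter_iff, mem_Ici, mem_Ioc, mem_Icc]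
          exact ⟨fun ⟨⟨_, b⟩, c⟩ => ⟨c, b⟩, fun ⟨a, b⟩ => ⟨⟨hu.1.trans_le a, b⟩, a⟩⟩
        rw [h2, integral_Icc_eq_integral_Ioc, integral_of_le hu.2,
          MeasureTheory.integral_mul_const, mul_comm]

lemma intint_all (f : ℝ → ℝ) (h : ∀ s, IntervalIntegrable f volume 0 s) :
    ∀ a b : ℝ, IntervalIntegrable f volume a b := fun a b => (h a).symm.trans (h b)

lemma pow_primitive (q : ℝ → ℝ) (hq : ∀ s, IntervalIntegrable q volume 0 s) (n : ℕ) :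
    ∀ t, 0 ≤ t → ∫ s in (0:ℝ)..t, (∫ u in (0:ℝ)..s, q u) ^ n * q s
        = (∫ u in (0:ℝ)..t, q u) ^ (n + 1) / (n + 1) := by
  have hcont : Continuous fun s => ∫ u in (0:ℝ)..s, q u :=
    intervalIntegral.continuous_primitive (intint_all q hq) 0
  induction n with
  | zero => intro t _; simp
  | succ n ih =>
    intro t ht
    set h : ℝ → ℝ := fun s => ∫ u in (0:ℝ)..s, q u with hh
    have hgint : ∀ s, IntervalIntegrable (fun u => h u ^ n * q u) volume 0 s := by
      intro s
      exact (hq s).continuousOn_mul ((hcont.pow n).continuousOn)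
    have hgint1 : ∀ s, IntervalIntegrable (fun u => h u ^ (n+1) * q u) volume 0 s := by
      intro s
      exact (hq s).continuousOn_mul ((hcont.pow (n+1)).continuousOn)
    have step1 : ∫ s in (0:ℝ)..t, h s ^ (n+1) * q s
        = ∫ s in (0:ℝ)..t, ((n:ℝ)+1) * ((∫ u in (0:ℝ)..s, h u ^ n * q u) * q s) := by
      rw [integral_of_le ht, integral_of_le ht]
      refine setIntegral_congr_fun measurableSet_Ioc (fun s hs => ?_)
      rw [ih s hs.1.le]
      have : ((n:ℝ)+1) ≠ 0 := by positivity
      field_simp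
      exact mul_comm _ _
    have step2 : ∫ u in (0:ℝ)..t, (h u ^ n * q u) * (∫ s in u..t, q s)
        = ∫ u in (0:ℝ)..t, (h t * (h u ^ n * q u) - h u ^ (n+1) * q u) := by
      rw [integral_of_le ht, integral_of_le ht]
      refine setIntegral_congr_fun measurableSet_Ioc (fun u hu => ?_)
      have : ∫ s in u..t, q s = h t - h u := by
        rw [hh]
        exact (integral_interval_sub_left (hq t) (hq u)).symm
      rw [this]; ring
    have hE : ∫ s in (0:ℝ)..t, h s ^ (n+1) * q s
        = ((n:ℝ)+1) * (h t * (h t ^ (n+1) / ((n:ℝ)+1))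
            - ∫ s in (0:ℝ)..t, h s ^ (n+1) * q s) := by
      conv_lhs => rw [step1, intervalIntegral.integral_const_mul,
        fubini_tri _ _ t ht hgint hq, step2,
        intervalIntegral.integral_sub (((hgint t).const_mul _)) (hgint1 t),
        intervalIntegral.integral_const_mul, ih t ht]
    set X := ∫ s in (0:ℝ)..t, h s ^ (n+1) * q s with hX
    have hn1 : ((n:ℝ)+1) ≠ 0 := by positivity
    have hn2 : ((n:ℝ)+2) ≠ 0 := by positivity
    have hA : ((n:ℝ)+1) * (h t * (h t ^ (n+1) / ((n:ℝ)+1))) = h t ^ (n+2) := by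
      field_simp; ring
    rw [mul_sub] at hE
    have hgoal : X = h t ^ (n+1+1) / ((n:ℝ)+1+1) := by
      rw [eq_div_iff (by positivity)]
      have : h t ^ (n+1+1) = h t ^ (n+2) := by norm_num
      rw [this]
      linarith [hE, hA]
    show X = h t ^ (n+1+1) / (((n+1:ℕ):ℝ)+1)
    push_cast
    exact hgoal

lemma real_exp_tsum (x : ℝ) : Real.exp x = ∑' n : ℕ, x ^ n / (n.factorial : ℝ) := by
  rw [Real.exp_eq_exp_ℝ, NormedSpace.exp_eq_tsum_div]

lemma exp_primitive (q : ℝ → ℝ) (hq : ∀ s, IntervalIntegrable q volume 0 s)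
    (t : ℝ) (ht : 0 ≤ t) :
    ∫ s in (0:ℝ)..t, Real.exp (∫ u in (0:ℝ)..s, q u) * q s
      = Real.exp (∫ u in (0:ℝ)..t, q u) - 1 := by
  set h : ℝ → ℝ := fun s => ∫ u in (0:ℝ)..s, q u with hh
  have hcont : Continuous h := intervalIntegral.continuous_primitive (intint_all q hq) 0
  obtain ⟨M, hM⟩ := isCompact_Icc.exists_bound_of_continuousOn (s := Icc (0:ℝ) t)
    hcont.continuousOn
  have hM0 : 0 ≤ M := le_trans (norm_nonneg (h 0)) (hM 0 (by constructor <;> simp [ht]))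
  set μ := volume.restrict (Ioc (0:ℝ) t) with hμ
  set F : ℕ → ℝ → ℝ := fun n s => h s ^ n / (n.factorial : ℝ) * q s with hF
  have hqint : IntegrableOn q (Ioc 0 t) volume :=
    (intervalIntegrable_iff_integrableOn_Ioc_of_le ht).mp (hq t)
  have hFint : ∀ n, Integrable (F n) μ := by
    intro n
    have : IntervalIntegrable (F n) volume 0 t := by
      exact (hq t).continuousOn_mul (((hcont.pow n).div_const _).continuousOn)
    exact (intervalIntegrable_iff_integrableOn_Ioc_of_le ht).mp this
  have hnorm : ∀ n, ∫ s, ‖F n s‖ ∂μ ≤ M ^ n / (n.factorial : ℝ) * ∫ s, ‖q s‖ ∂μ := by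
    intro n
    rw [← MeasureTheory.integral_const_mul]
    refine integral_mono_ae (hFint n).norm ((hqint.norm).const_mul _) ?_
    rw [hμ]
    filter_upwards [ae_restrict_mem measurableSet_Ioc] with s hs
    have hb : ‖h s‖ ≤ M := hM s ⟨hs.1.le, hs.2⟩
    have : ‖F n s‖ = |h s| ^ n / (n.factorial : ℝ) * ‖q s‖ := by
      rw [hF]; simp [abs_mul, abs_div, abs_pow, Nat.abs_cast]
    rw [this]
    have hb' : |h s| ≤ M := hb
    have h3 : |h s| ^ n ≤ M ^ n := pow_le_pow_left₀ (abs_nonneg _) hb' n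
    have h4 : (0:ℝ) ≤ ((n.factorial : ℝ))⁻¹ := by positivity
    rw [div_eq_mul_inv, div_eq_mul_inv]
    exact mul_le_mul_of_nonneg_right (mul_le_mul_of_nonneg_right h3 h4) (norm_nonneg _)
  have hsum : Summable fun n => ∫ s, ‖F n s‖ ∂μ := by
    refine Summable.of_nonneg_of_le (fun n => integral_nonneg (fun s => norm_nonneg _))
      hnorm ?_
    exact (Real.summable_pow_div_factorial M).mul_right _
  have hswap := MeasureTheory.integral_tsum_of_summable_integral_norm hFint hsum
  have hFn : ∀ n, ∫ s, F n s ∂μ = h t ^ (n+1) / ((n+1).factorial : ℝ) := by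
    intro n
    have h1 : ∫ s, F n s ∂μ = (1 / (n.factorial : ℝ)) * ∫ s in (0:ℝ)..t, h s ^ n * q s := by
      rw [integral_of_le ht, ← MeasureTheory.integral_const_mul, hμ]
      refine integral_congr_ae (Filter.Eventually.of_forall fun s => ?_)
      rw [hF]; ring
    rw [h1, pow_primitive q hq n t ht]
    rw [Nat.factorial_succ]
    push_cast
    have h2 : (n.factorial : ℝ) ≠ 0 := by positivity
    have hIt : (∫ u in (0:ℝ)..t, q u) = h t := rfl
    rw [hIt, div_mul_div_comm, one_mul, mul_comm]
  have htsum : ∑' n, ∫ s, F n s ∂μ = Real.exp (h t) - 1 := by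
    rw [tsum_congr hFn]
    have hexp := real_exp_tsum (h t)
    have hsum2 : Summable fun n : ℕ => h t ^ n / (n.factorial : ℝ) := Real.summable_pow_div_factorial _
    rw [Summable.tsum_eq_zero_add hsum2] at hexp
    simp only [pow_zero, Nat.factorial_zero, Nat.cast_one] at hexp
    rw [hexp]; ring
  have hpt : ∀ s, ∑' n, F n s = Real.exp (h s) * q s := by
    intro s
    rw [hF]
    simp only
    rw [tsum_mul_right, ← real_exp_tsum]
  rw [integral_of_le ht]
  calc ∫ s in Ioc (0:ℝ) t, Real.exp (h s) * q s
      = ∫ s, (∑' n, F n s) ∂μ := by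
        rw [hμ]; exact integral_congr_ae (Filter.Eventually.of_forall fun s => (hpt s).symm)
    _ = ∑' n, ∫ s, F n s ∂μ := hswap.symm
    _ = Real.exp (h t) - 1 := htsum


/-- expansion of the difference of cumulative incidence functions.
With cause-specific hazard densities `λ̂ᵢ, λᵢ` (`i ∈ {1,2}`, here `i : Fin 2`),
`Ŝ = exp(-Λ̂₁-Λ̂₂)`, `S = exp(-Λ₁-Λ₂)`, `F̂_j(t) = ∫_0^t Ŝ λ̂_j`, `F_j(t) = ∫_0^t S λ_j`:
`F̂_j(t) - F_j(t) = Σ_{i=1,2} ∫_0^t S(s)·[1(i=j) + (F̂_j(s) - F̂_j(t))/Ŝ(s)]·(λ̂ᵢ(s) - λᵢ(s)) ds`. -/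
theorem stmt7 (lamhat lam : Fin 2 → ℝ → ℝ) (Lamhat Lam : Fin 2 → ℝ → ℝ)
    (Shat S : ℝ → ℝ) (Fhat F : Fin 2 → ℝ → ℝ) (j : Fin 2) (t : ℝ) (ht : 0 ≤ t)
    (hpos1 : ∀ i u, 0 ≤ lamhat i u) (hpos2 : ∀ i u, 0 ≤ lam i u)
    (hint1 : ∀ i s, IntervalIntegrable (lamhat i) volume 0 s)
    (hint2 : ∀ i s, IntervalIntegrable (lam i) volume 0 s)
    (hLamhat : ∀ i s, Lamhat i s = ∫ u in (0:ℝ)..s, lamhat i u)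
    (hLam : ∀ i s, Lam i s = ∫ u in (0:ℝ)..s, lam i u)
    (hShat : ∀ s, Shat s = Real.exp (-(Lamhat 0 s + Lamhat 1 s)))
    (hS : ∀ s, S s = Real.exp (-(Lam 0 s + Lam 1 s)))
    (hFhat : ∀ i s, Fhat i s = ∫ u in (0:ℝ)..s, Shat u * lamhat i u)
    (hF : ∀ i s, F i s = ∫ u in (0:ℝ)..s, S u * lam i u) :
    Fhat j t - F j t
      = ∑ i : Fin 2, ∫ s in (0:ℝ)..t,
          S s * ((if i = j then (1:ℝ) else 0) + (Fhat j s - Fhat j t) / Shat s)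
            * (lamhat i s - lam i s) := by
  -- the combined hazard difference
  set q : ℝ → ℝ := fun u => (lamhat 0 u + lamhat 1 u) - (lam 0 u + lam 1 u) with hqdef
  have hqint : ∀ s, IntervalIntegrable q volume 0 s :=
    fun s => (((hint1 0 s).add (hint1 1 s)).sub ((hint2 0 s).add (hint2 1 s)))
  have hprim : ∀ s, (∫ u in (0:ℝ)..s, q u)
      = (Lamhat 0 s + Lamhat 1 s) - (Lam 0 s + Lam 1 s) := by
    intro s
    rw [hLamhat, hLamhat, hLam, hLam, ← intervalIntegral.integral_add (hint1 0 s) (hint1 1 s),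
      ← intervalIntegral.integral_add (hint2 0 s) (hint2 1 s),
      ← intervalIntegral.integral_sub ((hint1 0 s).add (hint1 1 s))
        ((hint2 0 s).add (hint2 1 s))]
  set G : ℝ → ℝ := fun s => Real.exp (∫ u in (0:ℝ)..s, q u) with hGdef
  have hGS : ∀ s, G s * Shat s = S s := by
    intro s
    rw [hGdef]
    simp only
    rw [hprim, hShat, hS, ← Real.exp_add]
    congr 1
    ring
  have hShat_ne : ∀ s, Shat s ≠ 0 := fun s => by rw [hShat]; exact (Real.exp_pos _).ne'
  -- continuity facts
  have hLhc : ∀ i, Continuous (Lamhat i) := by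
    intro i
    rw [show Lamhat i = fun s => ∫ u in (0:ℝ)..s, lamhat i u from funext (hLamhat i)]
    exact intervalIntegral.continuous_primitive (intint_all _ (hint1 i)) 0
  have hLc : ∀ i, Continuous (Lam i) := by
    intro i
    rw [show Lam i = fun s => ∫ u in (0:ℝ)..s, lam i u from funext (hLam i)]
    exact intervalIntegral.continuous_primitive (intint_all _ (hint2 i)) 0
  have hShatc : Continuous Shat := by
    rw [show Shat = fun s => Real.exp (-(Lamhat 0 s + Lamhat 1 s)) from funext hShat]
    exact Real.continuous_exp.comp ((((hLhc 0).add (hLhc 1))).neg)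
  have hSc : Continuous S := by
    rw [show S = fun s => Real.exp (-(Lam 0 s + Lam 1 s)) from funext hS]
    exact Real.continuous_exp.comp ((((hLc 0).add (hLc 1))).neg)
  have hGc : Continuous G := by
    rw [hGdef]
    exact Real.continuous_exp.comp (intervalIntegral.continuous_primitive (intint_all _ hqint) 0)
  -- Fhat j is the primitive of f := Shat * lamhat j
  set f : ℝ → ℝ := fun u => Shat u * lamhat j u with hfdef
  have hfint : ∀ s, IntervalIntegrable f volume 0 s :=
    fun s => (hint1 j s).continuousOn_mul hShatc.continuousOn
  have hFhc : Continuous (Fhat j) := by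
    rw [show Fhat j = fun s => ∫ u in (0:ℝ)..s, f u from funext (hFhat j)]
    exact intervalIntegral.continuous_primitive (intint_all _ hfint) 0
  set C : ℝ := Fhat j t with hCdef
  -- the continuous middle factor
  have hDc : Continuous fun s => Fhat j s - C := hFhc.sub continuous_const
  have hmidc : Continuous fun s => S s * ((Fhat j s - C) / Shat s) :=
    hSc.mul (hDc.div hShatc hShat_ne)
  -- integrability of each summand in the RHS
  have hIint : ∀ i : Fin 2, IntervalIntegrable (fun s =>
      S s * ((if i = j then (1:ℝ) else 0) + (Fhat j s - C) / Shat s)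
        * (lamhat i s - lam i s)) volume 0 t := by
    intro i
    refine ((hint1 i t).sub (hint2 i t)).continuousOn_mul ?_
    exact (hSc.mul ((continuous_const.add (hDc.div hShatc hShat_ne)))).continuousOn
  -- pointwise splitting of the summed integrand
  have hsplit : ∀ s,
      (S s * ((if (0:Fin 2) = j then (1:ℝ) else 0) + (Fhat j s - C) / Shat s)
        * (lamhat 0 s - lam 0 s))
      + (S s * ((if (1:Fin 2) = j then (1:ℝ) else 0) + (Fhat j s - C) / Shat s)
        * (lamhat 1 s - lam 1 s))
      = S s * (lamhat j s - lam j s) + ((Fhat j s - C) * G s) * q s := by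
    intro s
    have hSs : S s = G s * Shat s := (hGS s).symm
    have hne := hShat_ne s
    fin_cases j <;>
      · simp only [hqdef, hSs]
        norm_num
        field_simp
        ring
  -- basic integrabilities
  have hSlh : IntervalIntegrable (fun s => S s * lamhat j s) volume 0 t :=
    (hint1 j t).continuousOn_mul hSc.continuousOn
  have hSl : IntervalIntegrable (fun s => S s * lam j s) volume 0 t :=
    (hint2 j t).continuousOn_mul hSc.continuousOn
  have hGq : ∀ s, IntervalIntegrable (fun u => G u * q u) volume 0 s :=
    fun s => (hqint s).continuousOn_mul hGc.continuousOn
  have hGint_eq : ∀ x, 0 ≤ x → (∫ s in (0:ℝ)..x, G s * q s) = G x - 1 := by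
    intro x hx
    simp only [hGdef]
    exact exp_primitive q hqint x hx
  have hint_a : IntervalIntegrable (fun s => S s * (lamhat j s - lam j s)) volume 0 t :=
    ((hint1 j t).sub (hint2 j t)).continuousOn_mul hSc.continuousOn
  have hint_b : IntervalIntegrable (fun s => ((Fhat j s - C) * G s) * q s) volume 0 t :=
    (hqint t).continuousOn_mul (hDc.mul hGc).continuousOn
  -- piece a
  have key_a : ∫ s in (0:ℝ)..t, S s * (lamhat j s - lam j s)
      = (∫ s in (0:ℝ)..t, S s * lamhat j s) - F j t := by
    rw [hF j t, ← intervalIntegral.integral_sub hSlh hSl]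
    exact intervalIntegral.integral_congr (fun s _ => by ring)
  -- piece b
  have int1 : IntervalIntegrable
      (fun s => (∫ u in (0:ℝ)..s, Shat u * lamhat j u) * (G s * q s)) volume 0 t :=
    (hGq t).continuousOn_mul
      (intervalIntegral.continuous_primitive (intint_all _ hfint) 0).continuousOn
  have int2 : IntervalIntegrable (fun s => C * (G s * q s)) volume 0 t :=
    (hGq t).const_mul C
  have key_b : ∫ s in (0:ℝ)..t, ((Fhat j s - C) * G s) * q s
      = C - ∫ s in (0:ℝ)..t, S s * lamhat j s := by
    have e2 : ∫ s in (0:ℝ)..t, ((Fhat j s - C) * G s) * q s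
        = (∫ s in (0:ℝ)..t, (∫ u in (0:ℝ)..s, Shat u * lamhat j u) * (G s * q s))
          - ∫ s in (0:ℝ)..t, C * (G s * q s) := by
      rw [← intervalIntegral.integral_sub int1 int2]
      exact intervalIntegral.integral_congr (fun s _ => by rw [hFhat j s]; ring)
    have e3 : ∫ s in (0:ℝ)..t, (∫ u in (0:ℝ)..s, Shat u * lamhat j u) * (G s * q s)
        = ∫ u in (0:ℝ)..t, (Shat u * lamhat j u) * (∫ s in u..t, G s * q s) :=
      fubini_tri _ _ t ht hfint hGq
    have e4 : ∫ u in (0:ℝ)..t, (Shat u * lamhat j u) * (∫ s in u..t, G s * q s)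
        = ∫ u in (0:ℝ)..t, (G t * (Shat u * lamhat j u) - S u * lamhat j u) := by
      rw [intervalIntegral.integral_of_le ht, intervalIntegral.integral_of_le ht]
      refine setIntegral_congr_fun measurableSet_Ioc (fun u hu => ?_)
      have h4 : ∫ s in u..t, G s * q s = G t - G u := by
        rw [← intervalIntegral.integral_interval_sub_left (hGq t) (hGq u),
          hGint_eq t ht, hGint_eq u hu.1.le]
        ring
      rw [h4, ← hGS u]
      ring
    have e5 : ∫ u in (0:ℝ)..t, (G t * (Shat u * lamhat j u) - S u * lamhat j u)
        = G t * C - ∫ u in (0:ℝ)..t, S u * lamhat j u := by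
      rw [intervalIntegral.integral_sub ((hfint t).const_mul (G t)) hSlh,
        intervalIntegral.integral_const_mul, ← hFhat j t]
    have e6 : ∫ s in (0:ℝ)..t, C * (G s * q s) = C * (G t - 1) := by
      rw [intervalIntegral.integral_const_mul, hGint_eq t ht]
    rw [e2, e3, e4, e5, e6]
    ring
  -- assemble
  rw [Fin.sum_univ_two, ← intervalIntegral.integral_add (hIint 0) (hIint 1),
    intervalIntegral.integral_congr (fun s _ => hsplit s),
    intervalIntegral.integral_add hint_a hint_b, key_a, key_b]
  ring
end

section
/- Suppose Λ̂_1, Λ̂_2, Λ_1, Λ_2 are nondecreasing absolutely continuous on [0, t*] with corresponding survival functions Ŝ, S bounded below by η > 0, and cumulative incidences F̂_j, F_j. Then there exist constants C_1, C_2 > 0 (depending only on η and t*) such that |F̂_j(t*) - F_j(t*)| ≤ C_1 · sup_{s ≤ t*}|Λ̂_1(s) - Λ_1(s)| + C_2 · sup_{s ≤ t*}|Λ̂_2(s) - Λ_2(s)|. -/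
open MeasureTheory intervalIntegral Set

/-- If `|ψ b - ψ a| ≤ c (M b - M a)²` for `a ≤ b` in `[0,t]`, `M` continuous, then `ψ t = ψ 0`. -/
lemma psi_const (ψ M : ℝ → ℝ) (c t : ℝ) (hc : 0 ≤ c) (ht : 0 ≤ t)
    (hM : ContinuousOn M (Icc 0 t)) (hM0t : M 0 ≤ M t)
    (hkey : ∀ a b, a ∈ Icc 0 t → b ∈ Icc 0 t → a ≤ b → |ψ b - ψ a| ≤ c * (M b - M a) ^ 2) :
    ψ t = ψ 0 := by
  have hkey' : ∀ a b, a ∈ Icc 0 t → b ∈ Icc 0 t → |ψ b - ψ a| ≤ c * (M b - M a) ^ 2 := by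
    intro a b ha hb
    rcases le_total a b with h | h
    · exact hkey a b ha hb h
    · have h2 := hkey b a hb ha h
      rw [abs_sub_comm] at h2
      calc |ψ b - ψ a| ≤ c * (M a - M b) ^ 2 := h2
        _ = c * (M b - M a) ^ 2 := by ring
  have main : ∀ ε > 0, |ψ t - ψ 0| ≤ c * (M t - M 0) * ε := by
    intro ε hε
    set D := M t - M 0 with hDdef
    have hD : 0 ≤ D := sub_nonneg.mpr hM0t
    set n : ℕ := ⌈D / ε⌉₊ with hn
    have hnD : D ≤ n * ε := by
      rw [← div_le_iff₀ hε]
      exact Nat.le_ceil _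
    set y : ℕ → ℝ := fun k => M 0 + min (k * ε) D with hy
    have hyIcc : ∀ k : ℕ, y k ∈ Icc (M 0) (M t) := by
      intro k
      constructor
      · have : (0:ℝ) ≤ min (k * ε) D := le_min (by positivity) hD
        simp only [hy]; linarith
      · have : min ((k:ℝ) * ε) D ≤ D := min_le_right _ _
        simp only [hy]; linarith
    have hs : ∀ k : ℕ, ∃ x ∈ Icc 0 t, M x = y k := fun k =>
      intermediate_value_Icc ht hM (hyIcc k)
    choose s hsmem hsval using hs
    have hymono : ∀ k : ℕ, y k ≤ y (k + 1) := by
      intro k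
      apply add_le_add le_rfl
      apply min_le_min _ le_rfl
      push_cast
      nlinarith [hε.le, Nat.cast_nonneg (α := ℝ) k]
    have hyub : ∀ k : ℕ, y (k + 1) - y k ≤ ε := by
      intro k
      simp only [hy]
      push_cast
      have h1 : ((k:ℝ) + 1) * ε ⊓ D ≤ ((k:ℝ) * ε ⊓ D) + ε := by
        rw [← min_add_add_right]
        exact min_le_min (le_of_eq (by ring)) (by linarith)
      linarith
    have hstep : ∀ k : ℕ, |ψ (s (k + 1)) - ψ (s k)| ≤ c * ε * (y (k + 1) - y k) := by
      intro k
      have h1 := hkey' (s k) (s (k + 1)) (hsmem k) (hsmem (k + 1))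
      rw [hsval, hsval] at h1
      have h2 := hymono k
      have h3 := hyub k
      have h4 : c * (y (k + 1) - y k) ^ 2 ≤ c * ε * (y (k + 1) - y k) := by
        nlinarith [mul_nonneg hc (sub_nonneg.mpr h2)]
      linarith
    have tel : ψ (s n) - ψ (s 0) = ∑ k ∈ Finset.range n, (ψ (s (k + 1)) - ψ (s k)) :=
      (Finset.sum_range_sub (fun k => ψ (s k)) n).symm
    have hmid : |ψ (s n) - ψ (s 0)| ≤ c * ε * D := by
      rw [tel]
      calc |∑ k ∈ Finset.range n, (ψ (s (k + 1)) - ψ (s k))|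
          ≤ ∑ k ∈ Finset.range n, |ψ (s (k + 1)) - ψ (s k)| :=
            Finset.abs_sum_le_sum_abs _ _
        _ ≤ ∑ k ∈ Finset.range n, c * ε * (y (k + 1) - y k) :=
            Finset.sum_le_sum fun k _ => hstep k
        _ = c * ε * (y n - y 0) := by
            rw [← Finset.mul_sum, Finset.sum_range_sub (fun k => y k)]
        _ ≤ c * ε * D := by
            have h0 : y 0 = M 0 := by simp [hy, hD]
            have h1 : y n - y 0 ≤ D := by
              have h2 := (hyIcc n).2
              rw [h0]
              simp only [hDdef] at h2 ⊢
              linarith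
            nlinarith [mul_nonneg hc hε.le]
    have hend1 : |ψ (s 0) - ψ 0| ≤ 0 := by
      have h1 := hkey' 0 (s 0) (by constructor <;> simp [ht]) (hsmem 0)
      rw [hsval] at h1
      have h0 : y 0 = M 0 := by simp [hy, hD]
      rw [h0] at h1
      simpa using h1
    have hend2 : |ψ t - ψ (s n)| ≤ 0 := by
      have h1 := hkey' (s n) t (hsmem n) (by constructor <;> simp [ht]) 
      rw [hsval] at h1
      have h0 : y n = M t := by
        simp only [hy]
        rw [min_eq_right hnD]
        simp [hDdef]
      rw [h0] at h1
      simpa using h1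
    calc |ψ t - ψ 0| ≤ |ψ t - ψ (s n)| + |ψ (s n) - ψ (s 0)| + |ψ (s 0) - ψ 0| := by
          have := abs_sub_le (ψ t) (ψ (s 0)) (ψ 0)
          have := abs_sub_le (ψ t) (ψ (s n)) (ψ (s 0))
          linarith
      _ ≤ c * ε * D := by linarith [abs_nonneg (ψ (s n) - ψ (s 0))]
      _ = c * (M t - M 0) * ε := by rw [← hDdef]; ring
  have main2 : ∀ ε > 0, |ψ t - ψ 0| ≤ ε := by
    intro ε hε
    have hcD : 0 ≤ c * (M t - M 0) := mul_nonneg hc (sub_nonneg.mpr hM0t)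
    have h := main (ε / (c * (M t - M 0) + 1)) (by positivity)
    calc |ψ t - ψ 0| ≤ c * (M t - M 0) * (ε / (c * (M t - M 0) + 1)) := h
      _ ≤ ε := by
        rw [mul_div_assoc', div_le_iff₀ (by linarith)]
        nlinarith
  have habs : |ψ t - ψ 0| ≤ 0 := by
    apply le_of_forall_pos_le_add
    intro ε hε
    have := main2 ε hε
    linarith
  have := abs_nonpos_iff.mp habs
  linarith

lemma expFTC (ℓ : ℝ → ℝ) (hℓ0 : ∀ u, 0 ≤ ℓ u)
    (hint : ∀ a b : ℝ, IntervalIntegrable ℓ volume a b) (t : ℝ) (ht : 0 ≤ t) :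
    (∫ u in (0:ℝ)..t, Real.exp (-(∫ v in (0:ℝ)..u, ℓ v)) * ℓ u)
      = 1 - Real.exp (-(∫ v in (0:ℝ)..t, ℓ v)) := by
  set Λ : ℝ → ℝ := fun s => ∫ v in (0:ℝ)..s, ℓ v with hΛ
  have hΛcont : Continuous Λ := intervalIntegral.continuous_primitive hint 0
  have hΛsub : ∀ a b : ℝ, Λ b - Λ a = ∫ v in a..b, ℓ v := fun a b =>
    integral_interval_sub_left (hint 0 b) (hint 0 a)
  have hΛmono : ∀ a b : ℝ, a ≤ b → Λ a ≤ Λ b := by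
    intro a b hab
    have h := hΛsub a b
    have h2 : 0 ≤ ∫ v in a..b, ℓ v := intervalIntegral.integral_nonneg hab fun u _ => hℓ0 u
    linarith
  have hΛ0 : Λ 0 = 0 := intervalIntegral.integral_same
  have hScont : Continuous fun u => Real.exp (-Λ u) := Real.continuous_exp.comp hΛcont.neg
  have hSint : ∀ a b : ℝ, IntervalIntegrable (fun u => Real.exp (-Λ u) * ℓ u) volume a b :=
    fun a b => (hint a b).continuousOn_mul hScont.continuousOn
  set ψ : ℝ → ℝ := fun s => (∫ u in (0:ℝ)..s, Real.exp (-Λ u) * ℓ u) + Real.exp (-Λ s) with hψ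
  have key := psi_const ψ Λ 1 t zero_le_one ht hΛcont.continuousOn (hΛmono 0 t ht) ?_
  · have h0 : ψ 0 = 1 := by simp [hψ, hΛ0]
    rw [h0] at key
    simp only [hψ] at key
    linarith
  · intro a b ha hb hab
    have hd : Λ a ≤ Λ b := hΛmono a b hab
    have ha0 : 0 ≤ Λ a := by
      have := hΛmono 0 a ha.1
      rw [hΛ0] at this; exact this
    have hsub := integral_interval_sub_left (hSint 0 b) (hSint 0 a)
    have hψd : ψ b - ψ a
        = (∫ u in a..b, Real.exp (-Λ u) * ℓ u) - (Real.exp (-Λ a) - Real.exp (-Λ b)) := by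
      simp only [hψ]
      linarith [hsub]
    have hIl : Real.exp (-Λ b) * (Λ b - Λ a) ≤ ∫ u in a..b, Real.exp (-Λ u) * ℓ u := by
      have hmono := intervalIntegral.integral_mono_on hab
        (((hint a b).const_mul (Real.exp (-Λ b)))) (hSint a b) ?_
      · rwa [intervalIntegral.integral_const_mul, ← hΛsub a b] at hmono
      · intro u hu
        have h1 : Λ u ≤ Λ b := hΛmono u b hu.2
        exact mul_le_mul_of_nonneg_right (Real.exp_le_exp.mpr (neg_le_neg h1)) (hℓ0 u)
    have hIu : (∫ u in a..b, Real.exp (-Λ u) * ℓ u) ≤ Real.exp (-Λ a) * (Λ b - Λ a) := by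
      have hmono := intervalIntegral.integral_mono_on hab (hSint a b)
        (((hint a b).const_mul (Real.exp (-Λ a)))) ?_
      · rwa [intervalIntegral.integral_const_mul, ← hΛsub a b] at hmono
      · intro u hu
        have h1 : Λ a ≤ Λ u := hΛmono a u hu.1
        exact mul_le_mul_of_nonneg_right (Real.exp_le_exp.mpr (neg_le_neg h1)) (hℓ0 u)
    have hexp1 : Real.exp (-Λ b) * Real.exp (Λ b - Λ a) = Real.exp (-Λ a) := by
      rw [← Real.exp_add]; ring_nf
    have hexp2 : Real.exp (-Λ a) * Real.exp (Λ a - Λ b) = Real.exp (-Λ b) := by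
      rw [← Real.exp_add]; ring_nf
    have hEl : Real.exp (-Λ b) * (Λ b - Λ a) ≤ Real.exp (-Λ a) - Real.exp (-Λ b) := by
      have h := Real.add_one_le_exp (Λ b - Λ a)
      nlinarith [Real.exp_pos (-Λ b)]
    have hEu : Real.exp (-Λ a) - Real.exp (-Λ b) ≤ Real.exp (-Λ a) * (Λ b - Λ a) := by
      have h := Real.add_one_le_exp (Λ a - Λ b)
      nlinarith [Real.exp_pos (-Λ a)]
    have hA1 : Real.exp (-Λ a) ≤ 1 := by
      have h := Real.exp_le_exp.mpr (neg_nonpos_of_nonneg ha0)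
      rwa [Real.exp_zero] at h
    have hB0 : 0 < Real.exp (-Λ b) := Real.exp_pos _
    rw [hψd]
    rw [abs_le]
    constructor
    · nlinarith
    · nlinarith

lemma prodRule (f g : ℝ → ℝ)
    (hf : ∀ a b : ℝ, IntervalIntegrable f volume a b)
    (hg : ∀ a b : ℝ, IntervalIntegrable g volume a b) (t : ℝ) (ht : 0 ≤ t) :
    (∫ u in (0:ℝ)..t, (f u * (∫ v in (0:ℝ)..u, g v) + (∫ v in (0:ℝ)..u, f v) * g u))
      = (∫ v in (0:ℝ)..t, f v) * (∫ v in (0:ℝ)..t, g v) := by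
  set F : ℝ → ℝ := fun s => ∫ v in (0:ℝ)..s, f v with hF
  set G : ℝ → ℝ := fun s => ∫ v in (0:ℝ)..s, g v with hG
  have hFcont : Continuous F := intervalIntegral.continuous_primitive hf 0
  have hGcont : Continuous G := intervalIntegral.continuous_primitive hg 0
  have hFsub : ∀ a b : ℝ, F b - F a = ∫ v in a..b, f v := fun a b =>
    integral_interval_sub_left (hf 0 b) (hf 0 a)
  have hGsub : ∀ a b : ℝ, G b - G a = ∫ v in a..b, g v := fun a b =>
    integral_interval_sub_left (hg 0 b) (hg 0 a)
  have hfG : ∀ a b : ℝ, IntervalIntegrable (fun u => f u * G u) volume a b := fun a b =>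
    (hf a b).mul_continuousOn hGcont.continuousOn
  have hFg : ∀ a b : ℝ, IntervalIntegrable (fun u => F u * g u) volume a b := fun a b =>
    (hg a b).continuousOn_mul hFcont.continuousOn
  have hsum : ∀ a b : ℝ, IntervalIntegrable (fun u => f u * G u + F u * g u) volume a b :=
    fun a b => (hfG a b).add (hFg a b)
  have habs : ∀ a b : ℝ, IntervalIntegrable (fun v => |f v| + |g v|) volume a b :=
    fun a b => (hf a b).abs.add (hg a b).abs
  set M : ℝ → ℝ := fun s => ∫ v in (0:ℝ)..s, (|f v| + |g v|) with hM
  have hMcont : Continuous M := intervalIntegral.continuous_primitive habs 0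
  have hMsub : ∀ a b : ℝ, M b - M a = ∫ v in a..b, (|f v| + |g v|) := fun a b =>
    integral_interval_sub_left (habs 0 b) (habs 0 a)
  set ψ : ℝ → ℝ := fun s => F s * G s - ∫ u in (0:ℝ)..s, (f u * G u + F u * g u) with hψ
  have hM0t : M 0 ≤ M t := by
    have h2 : 0 ≤ ∫ v in (0:ℝ)..t, (|f v| + |g v|) :=
      intervalIntegral.integral_nonneg ht fun u _ => by positivity
    have h := hMsub 0 t; linarith
  have key := psi_const ψ M 3 t (by norm_num) ht hMcont.continuousOn hM0t ?_
  · have h0 : ψ 0 = 0 := by simp [hψ, hF, hG]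
    rw [h0] at key
    simp only [hψ] at key
    linarith
  · intro a b ha hb hab
    set Vf : ℝ := ∫ v in a..b, |f v| with hVf
    set Vg : ℝ := ∫ v in a..b, |g v| with hVg
    have hVf0 : 0 ≤ Vf := intervalIntegral.integral_nonneg hab fun u _ => abs_nonneg _
    have hVg0 : 0 ≤ Vg := intervalIntegral.integral_nonneg hab fun u _ => abs_nonneg _
    have hGbd : ∀ u, u ∈ Icc a b → |G u - G a| ≤ Vg := by
      intro u hu
      rw [hGsub a u]
      calc |∫ v in a..u, g v| ≤ ∫ v in a..u, |g v| :=
            intervalIntegral.abs_integral_le_integral_abs hu.1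
        _ ≤ Vg := by
          have h := integral_interval_sub_left ((hg a b).abs) ((hg a u).abs)
          have h2 : 0 ≤ ∫ v in u..b, |g v| :=
            intervalIntegral.integral_nonneg hu.2 fun w _ => abs_nonneg _
          rw [hVg]; linarith
    have hFbd : ∀ u, u ∈ Icc a b → |F u - F a| ≤ Vf := by
      intro u hu
      rw [hFsub a u]
      calc |∫ v in a..u, f v| ≤ ∫ v in a..u, |f v| :=
            intervalIntegral.abs_integral_le_integral_abs hu.1
        _ ≤ Vf := by
          have h := integral_interval_sub_left ((hf a b).abs) ((hf a u).abs)
          have h2 : 0 ≤ ∫ v in u..b, |f v| :=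
            intervalIntegral.integral_nonneg hu.2 fun w _ => abs_nonneg _
          rw [hVf]; linarith
    -- R1 and R2
    set R1 : ℝ := ∫ u in a..b, f u * (G u - G a) with hR1def
    set R2 : ℝ := ∫ u in a..b, (F u - F a) * g u with hR2def
    have hintR1 : IntervalIntegrable (fun u => f u * (G u - G a)) volume a b :=
      (hf a b).mul_continuousOn (hGcont.sub continuous_const).continuousOn
    have hintR2 : IntervalIntegrable (fun u => (F u - F a) * g u) volume a b :=
      (hg a b).continuousOn_mul (hFcont.sub continuous_const).continuousOn
    have hR1 : |R1| ≤ Vf * Vg := by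
      calc |R1| ≤ ∫ u in a..b, |f u * (G u - G a)| := by
            rw [hR1def]; exact intervalIntegral.abs_integral_le_integral_abs hab
        _ ≤ ∫ u in a..b, |f u| * Vg := by
            apply intervalIntegral.integral_mono_on hab hintR1.abs
              (((hf a b).abs).mul_const Vg)
            intro u hu
            rw [abs_mul]
            exact mul_le_mul_of_nonneg_left (hGbd u hu) (abs_nonneg _)
        _ = Vf * Vg := by rw [intervalIntegral.integral_mul_const]
    have hR2 : |R2| ≤ Vf * Vg := by
      calc |R2| ≤ ∫ u in a..b, |(F u - F a) * g u| := by
            rw [hR2def]; exact intervalIntegral.abs_integral_le_integral_abs hab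
        _ ≤ ∫ u in a..b, Vf * |g u| := by
            apply intervalIntegral.integral_mono_on hab hintR2.abs
              (((hg a b).abs).const_mul Vf)
            intro u hu
            rw [abs_mul]
            exact mul_le_mul_of_nonneg_right (hFbd u hu) (abs_nonneg _)
        _ = Vf * Vg := by rw [intervalIntegral.integral_const_mul]
    -- decomposition of the integral
    have hiab : (∫ u in a..b, (f u * G u + F u * g u))
        = ((F b - F a) * G a + R1) + (F a * (G b - G a) + R2) := by
      rw [intervalIntegral.integral_add (hfG a b) (hFg a b)]
      have e1 : (∫ u in a..b, f u * G u) = (F b - F a) * G a + R1 := by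
        have : (∫ u in a..b, f u * G u) = ∫ u in a..b, (f u * G a + f u * (G u - G a)) := by
          apply intervalIntegral.integral_congr
          intro u _; ring
        rw [this, intervalIntegral.integral_add ((hf a b).mul_const _) hintR1,
          intervalIntegral.integral_mul_const, ← hFsub a b]
      have e2 : (∫ u in a..b, F u * g u) = F a * (G b - G a) + R2 := by
        have : (∫ u in a..b, F u * g u) = ∫ u in a..b, (F a * g u + (F u - F a) * g u) := by
          apply intervalIntegral.integral_congr
          intro u _; ring
        rw [this, intervalIntegral.integral_add ((hg a b).const_mul _) hintR2,
          intervalIntegral.integral_const_mul, ← hGsub a b]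
      rw [e1, e2]
    have hpsisub := integral_interval_sub_left (hsum 0 b) (hsum 0 a)
    have heq : ψ b - ψ a = (F b - F a) * (G b - G a) - R1 - R2 := by
      simp only [hψ]
      have : (∫ u in (0:ℝ)..b, (f u * G u + F u * g u))
          - ∫ u in (0:ℝ)..a, (f u * G u + F u * g u)
          = ((F b - F a) * G a + R1) + (F a * (G b - G a) + R2) := by
        rw [hpsisub, hiab]
      linarith [this]
    have hΔF : |F b - F a| ≤ Vf := by
      have := hFbd b ⟨hab, le_rfl⟩; exact this
    have hΔG : |G b - G a| ≤ Vg := by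
      have := hGbd b ⟨hab, le_rfl⟩; exact this
    have hMab : M b - M a = Vf + Vg := by
      rw [hMsub a b, intervalIntegral.integral_add ((hf a b).abs) ((hg a b).abs), hVf, hVg]
    rw [heq, hMab, abs_le]
    have h1 := abs_le.mp hR1
    have h2 := abs_le.mp hR2
    have h3 := abs_le.mp hΔF
    have h4 := abs_le.mp hΔG
    have h5 : |(F b - F a) * (G b - G a)| ≤ Vf * Vg := by
      rw [abs_mul]
      exact mul_le_mul hΔF hΔG (abs_nonneg _) hVf0
    have h6 := abs_le.mp h5
    have h7 : Vf * Vg ≤ (Vf + Vg) ^ 2 := by nlinarith [sq_nonneg (Vf - Vg), mul_nonneg hVf0 hVg0]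
    constructor <;> linarith

lemma exp_neg_lip {x y : ℝ} (hx : 0 ≤ x) (hy : 0 ≤ y) :
    |Real.exp (-x) - Real.exp (-y)| ≤ |x - y| := by
  have aux : ∀ a b : ℝ, 0 ≤ a → a ≤ b → |Real.exp (-a) - Real.exp (-b)| ≤ b - a := by
    intro a b ha hab
    have h1 := Real.add_one_le_exp (a - b)
    have h2 : Real.exp (-a) * Real.exp (a - b) = Real.exp (-b) := by
      rw [← Real.exp_add]; ring_nf
    have h3 : Real.exp (-a) ≤ 1 := by
      have h := Real.exp_le_exp.mpr (neg_nonpos_of_nonneg ha)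
      rwa [Real.exp_zero] at h
    have h4 : Real.exp (-b) ≤ Real.exp (-a) := Real.exp_le_exp.mpr (by linarith)
    rw [abs_of_nonneg (by linarith)]
    nlinarith [Real.exp_pos (-a)]
  rcases le_total x y with h | h
  · rw [abs_sub_comm x y, abs_of_nonneg (sub_nonneg.mpr h)]
    exact aux x y hx h
  · rw [abs_sub_comm (Real.exp (-x)) (Real.exp (-y)), abs_of_nonneg (sub_nonneg.mpr h)]
    exact aux y x hy h

/-- there exist constants `C₁, C₂ > 0`, depending only on `η` and `t*`,
such that for any pair of competing-risks hazard systems (nondecreasing absolutely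
continuous cumulative hazards given by densities, with survival functions bounded
below by `η` on `[0,t*]`), the cumulative incidences satisfy
`|F̂_j(t*) - F_j(t*)| ≤ C₁·sup_{s≤t*}|Λ̂₁ - Λ₁| + C₂·sup_{s≤t*}|Λ̂₂ - Λ₂|`. -/
theorem stmt9 (η tstar : ℝ) (hη : 0 < η) (ht : 0 < tstar) :
    ∃ C1 C2 : ℝ, 0 < C1 ∧ 0 < C2 ∧
      ∀ (lamhat lam : Fin 2 → ℝ → ℝ) (Lamhat Lam : Fin 2 → ℝ → ℝ)
        (Shat S : ℝ → ℝ) (Fhat F : Fin 2 → ℝ → ℝ) (j : Fin 2),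
        (∀ i u, 0 ≤ lamhat i u) → (∀ i u, 0 ≤ lam i u) →
        (∀ i s, IntervalIntegrable (lamhat i) volume 0 s) →
        (∀ i s, IntervalIntegrable (lam i) volume 0 s) →
        (∀ i s, Lamhat i s = ∫ u in (0:ℝ)..s, lamhat i u) →
        (∀ i s, Lam i s = ∫ u in (0:ℝ)..s, lam i u) →
        (∀ s, Shat s = Real.exp (-(Lamhat 0 s + Lamhat 1 s))) →
        (∀ s, S s = Real.exp (-(Lam 0 s + Lam 1 s))) →
        (∀ s ∈ Icc 0 tstar, η ≤ Shat s) →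
        (∀ s ∈ Icc 0 tstar, η ≤ S s) →
        (∀ i s, Fhat i s = ∫ u in (0:ℝ)..s, Shat u * lamhat i u) →
        (∀ i s, F i s = ∫ u in (0:ℝ)..s, S u * lam i u) →
        |Fhat j tstar - F j tstar|
          ≤ C1 * (⨆ s : Icc 0 tstar, |Lamhat 0 (s:ℝ) - Lam 0 (s:ℝ)|)
            + C2 * (⨆ s : Icc 0 tstar, |Lamhat 1 (s:ℝ) - Lam 1 (s:ℝ)|) := by
  have hmax0 : (0:ℝ) ≤ max (Real.log η⁻¹) 0 := le_max_right _ _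
  refine ⟨2 * max (Real.log η⁻¹) 0 + 3, 2 * max (Real.log η⁻¹) 0 + 3,
    by linarith, by linarith, ?_⟩
  intro lamhat lam Lamhat Lam Shat S Fhat F j hlh0 hl0 hIIh hII hLamhat hLam hShat hS
    hShatlb hSlb hFhat hF
  set L : ℝ := max (Real.log η⁻¹) 0 with hLdef
  -- interval integrability on all intervals
  have hIIh' : ∀ i (a b : ℝ), IntervalIntegrable (lamhat i) volume a b :=
    fun i a b => (hIIh i a).symm.trans (hIIh i b)
  have hII' : ∀ i (a b : ℝ), IntervalIntegrable (lam i) volume a b :=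
    fun i a b => (hII i a).symm.trans (hII i b)
  -- nonnegativity of cumulative hazards
  have hnnh : ∀ i (s : ℝ), 0 ≤ s → 0 ≤ Lamhat i s := fun i s hs => by
    rw [hLamhat]; exact intervalIntegral.integral_nonneg hs fun u _ => hlh0 i u
  have hnn : ∀ i (s : ℝ), 0 ≤ s → 0 ≤ Lam i s := fun i s hs => by
    rw [hLam]; exact intervalIntegral.integral_nonneg hs fun u _ => hl0 i u
  -- cumulative hazards bounded by L on [0, tstar]
  have hsumleh : ∀ s ∈ Icc (0:ℝ) tstar, Lamhat 0 s + Lamhat 1 s ≤ L := by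
    intro s hs
    have h1 := hShatlb s hs
    rw [hShat] at h1
    have h2 : Real.log η ≤ -(Lamhat 0 s + Lamhat 1 s) := (Real.log_le_iff_le_exp hη).mpr h1
    have h3 : Real.log η⁻¹ ≤ L := le_max_left _ _
    rw [Real.log_inv] at h3
    linarith
  have hsumle : ∀ s ∈ Icc (0:ℝ) tstar, Lam 0 s + Lam 1 s ≤ L := by
    intro s hs
    have h1 := hSlb s hs
    rw [hS] at h1
    have h2 : Real.log η ≤ -(Lam 0 s + Lam 1 s) := (Real.log_le_iff_le_exp hη).mpr h1
    have h3 : Real.log η⁻¹ ≤ L := le_max_left _ _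
    rw [Real.log_inv] at h3
    linarith
  have hcomph : ∀ i, ∀ s ∈ Icc (0:ℝ) tstar, Lamhat i s ≤ L := by
    intro i s hs
    have h1 := hsumleh s hs
    have h2 := hnnh 0 s hs.1
    have h3 := hnnh 1 s hs.1
    fin_cases i <;> simp <;> linarith
  have hcomp : ∀ i, ∀ s ∈ Icc (0:ℝ) tstar, Lam i s ≤ L := by
    intro i s hs
    have h1 := hsumle s hs
    have h2 := hnn 0 s hs.1
    have h3 := hnn 1 s hs.1
    fin_cases i <;> simp <;> linarith
  -- suprema
  have hbdd : ∀ i : Fin 2, BddAbove (Set.range fun s : Icc (0:ℝ) tstar =>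
      |Lamhat i (s:ℝ) - Lam i (s:ℝ)|) := by
    intro i
    refine ⟨2 * L, ?_⟩
    rintro x ⟨s, rfl⟩
    have h1 := hcomph i s s.2
    have h2 := hcomp i s s.2
    have h3 := hnnh i s s.2.1
    have h4 := hnn i s s.2.1
    rw [abs_le]; constructor <;> linarith
  have hDle : ∀ i : Fin 2, ∀ s ∈ Icc (0:ℝ) tstar, |Lamhat i s - Lam i s|
      ≤ ⨆ s : Icc (0:ℝ) tstar, |Lamhat i (s:ℝ) - Lam i (s:ℝ)| := by
    intro i s hs
    exact le_ciSup (hbdd i) (⟨s, hs⟩ : Icc (0:ℝ) tstar)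
  have hDnn : ∀ i : Fin 2, 0 ≤ ⨆ s : Icc (0:ℝ) tstar, |Lamhat i (s:ℝ) - Lam i (s:ℝ)| :=
    fun i => le_trans (abs_nonneg _) (hDle i 0 ⟨le_rfl, ht.le⟩)
  set D0 : ℝ := ⨆ s : Icc (0:ℝ) tstar, |Lamhat 0 (s:ℝ) - Lam 0 (s:ℝ)| with hD0def
  set D1 : ℝ := ⨆ s : Icc (0:ℝ) tstar, |Lamhat 1 (s:ℝ) - Lam 1 (s:ℝ)| with hD1def
  set Dj : ℝ := ⨆ s : Icc (0:ℝ) tstar, |Lamhat j (s:ℝ) - Lam j (s:ℝ)| with hDjdef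
  -- continuity
  have hLhcont : ∀ i, Continuous (Lamhat i) := by
    intro i
    have hfe : Lamhat i = fun s => ∫ u in (0:ℝ)..s, lamhat i u := funext (hLamhat i)
    rw [hfe]
    exact intervalIntegral.continuous_primitive (hIIh' i) 0
  have hLcont : ∀ i, Continuous (Lam i) := by
    intro i
    have hfe : Lam i = fun s => ∫ u in (0:ℝ)..s, lam i u := funext (hLam i)
    rw [hfe]
    exact intervalIntegral.continuous_primitive (hII' i) 0
  have hShatcont : Continuous Shat := by
    have hfe : Shat = fun s => Real.exp (-(Lamhat 0 s + Lamhat 1 s)) := funext hShat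
    rw [hfe]
    exact Real.continuous_exp.comp ((hLhcont 0).add (hLhcont 1)).neg
  have hScont : Continuous S := by
    have hfe : S = fun s => Real.exp (-(Lam 0 s + Lam 1 s)) := funext hS
    rw [hfe]
    exact Real.continuous_exp.comp ((hLcont 0).add (hLcont 1)).neg
  -- S bounds
  have hSpos : ∀ s : ℝ, 0 < S s := fun s => by rw [hS]; exact Real.exp_pos _
  have hSle1 : ∀ s : ℝ, 0 ≤ s → S s ≤ 1 := by
    intro s hs
    rw [hS]
    have h1 := hnn 0 s hs
    have h2 := hnn 1 s hs
    have := Real.exp_le_exp.mpr (show -(Lam 0 s + Lam 1 s) ≤ 0 by linarith)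
    rwa [Real.exp_zero] at this
  -- the split
  have hI1 : IntervalIntegrable (fun u => Shat u * lamhat j u) volume 0 tstar :=
    (hIIh' j 0 tstar).continuousOn_mul hShatcont.continuousOn
  have hI2 : IntervalIntegrable (fun u => S u * lam j u) volume 0 tstar :=
    (hII' j 0 tstar).continuousOn_mul hScont.continuousOn
  have hIT1 : IntervalIntegrable (fun u => (Shat u - S u) * lamhat j u) volume 0 tstar :=
    (hIIh' j 0 tstar).continuousOn_mul (hShatcont.sub hScont).continuousOn
  have hIT2 : IntervalIntegrable (fun u => S u * (lamhat j u - lam j u)) volume 0 tstar :=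
    ((hIIh' j 0 tstar).sub (hII' j 0 tstar)).continuousOn_mul hScont.continuousOn
  have hsplit : Fhat j tstar - F j tstar
      = (∫ u in (0:ℝ)..tstar, (Shat u - S u) * lamhat j u)
        + ∫ u in (0:ℝ)..tstar, S u * (lamhat j u - lam j u) := by
    rw [hFhat, hF, ← intervalIntegral.integral_sub hI1 hI2,
      ← intervalIntegral.integral_add hIT1 hIT2]
    apply intervalIntegral.integral_congr
    intro u _
    ring
  -- Term 1 bound
  have hT1 : |∫ u in (0:ℝ)..tstar, (Shat u - S u) * lamhat j u| ≤ L * (D0 + D1) := by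
    calc |∫ u in (0:ℝ)..tstar, (Shat u - S u) * lamhat j u|
        ≤ ∫ u in (0:ℝ)..tstar, |(Shat u - S u) * lamhat j u| :=
          intervalIntegral.abs_integral_le_integral_abs ht.le
      _ ≤ ∫ u in (0:ℝ)..tstar, (D0 + D1) * lamhat j u := by
          apply intervalIntegral.integral_mono_on ht.le hIT1.abs
            ((hIIh' j 0 tstar).const_mul _)
          intro u hu
          rw [abs_mul, abs_of_nonneg (hlh0 j u)]
          apply mul_le_mul_of_nonneg_right _ (hlh0 j u)
          have hlip : |Shat u - S u| ≤ |(Lamhat 0 u + Lamhat 1 u) - (Lam 0 u + Lam 1 u)| := by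
            rw [hShat, hS]
            have h1 : 0 ≤ Lamhat 0 u + Lamhat 1 u := by
              have := hnnh 0 u hu.1; have := hnnh 1 u hu.1; linarith
            have h2 : 0 ≤ Lam 0 u + Lam 1 u := by
              have := hnn 0 u hu.1; have := hnn 1 u hu.1; linarith
            exact exp_neg_lip h1 h2
          have h3 := hDle 0 u hu
          have h4 := hDle 1 u hu
          rw [← hD0def] at h3
          rw [← hD1def] at h4
          have h5 : |(Lamhat 0 u + Lamhat 1 u) - (Lam 0 u + Lam 1 u)|
              ≤ |Lamhat 0 u - Lam 0 u| + |Lamhat 1 u - Lam 1 u| := by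
            have := abs_add_le (Lamhat 0 u - Lam 0 u) (Lamhat 1 u - Lam 1 u)
            calc |(Lamhat 0 u + Lamhat 1 u) - (Lam 0 u + Lam 1 u)|
                = |(Lamhat 0 u - Lam 0 u) + (Lamhat 1 u - Lam 1 u)| := by ring_nf
              _ ≤ _ := this
          linarith
      _ = (D0 + D1) * Lamhat j tstar := by
          rw [intervalIntegral.integral_const_mul, ← hLamhat]
      _ ≤ (D0 + D1) * L := by
          apply mul_le_mul_of_nonneg_left (hcomph j tstar ⟨ht.le, le_rfl⟩)
          have := hDnn 0; have := hDnn 1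
          rw [← hD0def] at *; rw [← hD1def] at *
          linarith [hDnn 0, hDnn 1]
      _ = L * (D0 + D1) := by ring
  -- Term 2
  set ℓ : ℝ → ℝ := fun u => lam 0 u + lam 1 u with hℓdef
  have hℓ0 : ∀ u, 0 ≤ ℓ u := fun u => by
    have h1 := hl0 0 u; have h2 := hl0 1 u; simp only [hℓdef]; linarith
  have hℓint : ∀ a b : ℝ, IntervalIntegrable ℓ volume a b := fun a b =>
    (hII' 0 a b).add (hII' 1 a b)
  have hℓprim : ∀ s : ℝ, (∫ v in (0:ℝ)..s, ℓ v) = Lam 0 s + Lam 1 s := by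
    intro s
    simp only [hℓdef]
    rw [intervalIntegral.integral_add (hII' 0 0 s) (hII' 1 0 s), ← hLam, ← hLam]
  have hSrepr : ∀ u : ℝ, S u = Real.exp (-(∫ v in (0:ℝ)..u, ℓ v)) := by
    intro u; rw [hS, hℓprim]
  set g : ℝ → ℝ := fun u => lamhat j u - lam j u with hgdef
  have hgint : ∀ a b : ℝ, IntervalIntegrable g volume a b := fun a b =>
    (hIIh' j a b).sub (hII' j a b)
  have hGeq : ∀ s : ℝ, (∫ v in (0:ℝ)..s, g v) = Lamhat j s - Lam j s := by
    intro s
    simp only [hgdef]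
    rw [intervalIntegral.integral_sub (hIIh' j 0 s) (hII' j 0 s), ← hLamhat, ← hLam]
  have hDjnn : 0 ≤ Dj := by have := hDnn j; rwa [← hDjdef] at this
  have hGbd : ∀ s ∈ Icc (0:ℝ) tstar, |∫ v in (0:ℝ)..s, g v| ≤ Dj := by
    intro s hs; rw [hGeq]
    have := hDle j s hs
    rwa [← hDjdef] at this
  have hSlint : ∀ a b : ℝ, IntervalIntegrable (fun u => S u * ℓ u) volume a b :=
    fun a b => (hℓint a b).continuousOn_mul hScont.continuousOn
  have hH : ∀ s : ℝ, 0 ≤ s → (∫ u in (0:ℝ)..s, S u * ℓ u) = 1 - S s := by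
    intro s hs
    have h1 := expFTC ℓ hℓ0 hℓint s hs
    have h2 : (∫ u in (0:ℝ)..s, S u * ℓ u)
        = ∫ u in (0:ℝ)..s, Real.exp (-(∫ v in (0:ℝ)..u, ℓ v)) * ℓ u := by
      apply intervalIntegral.integral_congr
      intro u _
      show S u * ℓ u = Real.exp (-(∫ v in (0:ℝ)..u, ℓ v)) * ℓ u
      rw [hSrepr u]
    rw [h2, h1, ← hSrepr s]
  have hGcont : Continuous fun s => ∫ v in (0:ℝ)..s, g v :=
    intervalIntegral.continuous_primitive hgint 0
  have hHcont : Continuous fun s => ∫ v in (0:ℝ)..s, S v * ℓ v :=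
    intervalIntegral.continuous_primitive hSlint 0
  have hIA : IntervalIntegrable (fun u => S u * ℓ u * (∫ v in (0:ℝ)..u, g v)) volume 0 tstar :=
    (hSlint 0 tstar).mul_continuousOn hGcont.continuousOn
  have hIB : IntervalIntegrable (fun u => (∫ v in (0:ℝ)..u, S v * ℓ v) * g u) volume 0 tstar :=
    (hgint 0 tstar).continuousOn_mul hHcont.continuousOn
  have hkey2 := prodRule (fun u => S u * ℓ u) g hSlint hgint tstar ht.le
  have e4 : (∫ u in (0:ℝ)..tstar, (S u * ℓ u * (∫ v in (0:ℝ)..u, g v)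
        + (∫ v in (0:ℝ)..u, S v * ℓ v) * g u))
      = (∫ u in (0:ℝ)..tstar, S u * ℓ u * (∫ v in (0:ℝ)..u, g v))
        + ∫ u in (0:ℝ)..tstar, (∫ v in (0:ℝ)..u, S v * ℓ v) * g u :=
    intervalIntegral.integral_add hIA hIB
  have e5 : (∫ u in (0:ℝ)..tstar, (∫ v in (0:ℝ)..u, S v * ℓ v) * g u)
      = (∫ v in (0:ℝ)..tstar, S v * ℓ v) * (∫ v in (0:ℝ)..tstar, g v)
        - ∫ u in (0:ℝ)..tstar, S u * ℓ u * (∫ v in (0:ℝ)..u, g v) := by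
    rw [← hkey2, e4]; ring
  have eq1 : (∫ u in (0:ℝ)..tstar, S u * g u)
      = (∫ u in (0:ℝ)..tstar, g u)
        - ∫ u in (0:ℝ)..tstar, (∫ v in (0:ℝ)..u, S v * ℓ v) * g u := by
    rw [← intervalIntegral.integral_sub (hgint 0 tstar) hIB]
    apply intervalIntegral.integral_congr
    intro u hu
    have hu' : u ∈ Icc (0:ℝ) tstar := by rwa [Set.uIcc_of_le ht.le] at hu
    have h3 := hH u hu'.1
    have h4 : S u = 1 - ∫ v in (0:ℝ)..u, S v * ℓ v := by rw [h3]; ring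
    show S u * g u = g u - (∫ v in (0:ℝ)..u, S v * ℓ v) * g u
    rw [h4]; ring
  -- bounds
  have hGt : |∫ v in (0:ℝ)..tstar, g v| ≤ Dj := hGbd tstar ⟨ht.le, le_rfl⟩
  have hHtGt : |(∫ v in (0:ℝ)..tstar, S v * ℓ v) * (∫ v in (0:ℝ)..tstar, g v)| ≤ 1 * Dj := by
    rw [abs_mul]
    apply mul_le_mul _ hGt (abs_nonneg _) one_pos.le
    rw [hH tstar ht.le]
    have h1 := hSpos tstar
    have h2 := hSle1 tstar ht.le
    rw [abs_le]; constructor <;> linarith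
  have hI3 : |∫ u in (0:ℝ)..tstar, S u * ℓ u * (∫ v in (0:ℝ)..u, g v)| ≤ L * Dj := by
    calc |∫ u in (0:ℝ)..tstar, S u * ℓ u * (∫ v in (0:ℝ)..u, g v)|
        ≤ ∫ u in (0:ℝ)..tstar, |S u * ℓ u * (∫ v in (0:ℝ)..u, g v)| :=
          intervalIntegral.abs_integral_le_integral_abs ht.le
      _ ≤ ∫ u in (0:ℝ)..tstar, ℓ u * Dj := by
          apply intervalIntegral.integral_mono_on ht.le hIA.abs ((hℓint 0 tstar).mul_const Dj)
          intro u hu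
          have hX := hGbd u hu
          have h1 := hSpos u
          have h2 := hSle1 u hu.1
          have h3 := hℓ0 u
          rw [abs_mul, abs_mul, abs_of_nonneg h1.le, abs_of_nonneg h3]
          have c1 : ℓ u * |∫ v in (0:ℝ)..u, g v| ≤ ℓ u * Dj :=
            mul_le_mul_of_nonneg_left hX h3
          have c2 : S u * (ℓ u * |∫ v in (0:ℝ)..u, g v|) ≤ 1 * (ℓ u * |∫ v in (0:ℝ)..u, g v|) :=
            mul_le_mul_of_nonneg_right h2 (mul_nonneg h3 (abs_nonneg _))
          calc S u * ℓ u * |∫ v in (0:ℝ)..u, g v|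
              = S u * (ℓ u * |∫ v in (0:ℝ)..u, g v|) := by ring
            _ ≤ 1 * (ℓ u * |∫ v in (0:ℝ)..u, g v|) := c2
            _ = ℓ u * |∫ v in (0:ℝ)..u, g v| := by ring
            _ ≤ ℓ u * Dj := c1
      _ = (Lam 0 tstar + Lam 1 tstar) * Dj := by
          rw [intervalIntegral.integral_mul_const, hℓprim]
      _ ≤ L * Dj := mul_le_mul_of_nonneg_right (hsumle tstar ⟨ht.le, le_rfl⟩) hDjnn
  have hT2 : |∫ u in (0:ℝ)..tstar, S u * (lamhat j u - lam j u)| ≤ (2 + L) * Dj := by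
    have hconv : (∫ u in (0:ℝ)..tstar, S u * (lamhat j u - lam j u))
        = ∫ u in (0:ℝ)..tstar, S u * g u := by
      apply intervalIntegral.integral_congr
      intro u _
      show S u * (lamhat j u - lam j u) = S u * g u
      simp only [hgdef]
    rw [hconv, eq1, e5]
    have a1 := abs_le.mp hGt
    have a2 := abs_le.mp hHtGt
    have a3 := abs_le.mp hI3
    rw [abs_le]; constructor <;> linarith
  -- final assembly
  have hfinal : |Fhat j tstar - F j tstar| ≤ L * (D0 + D1) + (2 + L) * Dj := by
    rw [hsplit]
    calc |(∫ u in (0:ℝ)..tstar, (Shat u - S u) * lamhat j u)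
          + ∫ u in (0:ℝ)..tstar, S u * (lamhat j u - lam j u)|
        ≤ |∫ u in (0:ℝ)..tstar, (Shat u - S u) * lamhat j u|
          + |∫ u in (0:ℝ)..tstar, S u * (lamhat j u - lam j u)| := abs_add_le _ _
      _ ≤ L * (D0 + D1) + (2 + L) * Dj := add_le_add hT1 hT2
  have hD0nn : 0 ≤ D0 := by have := hDnn 0; rwa [← hD0def] at this
  have hD1nn : 0 ≤ D1 := by have := hDnn 1; rwa [← hD1def] at this
  have hL0 : 0 ≤ L := hmax0
  have hj : j = 0 ∨ j = 1 := by
    exact Fin.exists_fin_two.mp ⟨j, rfl⟩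
  rcases hj with rfl | rfl
  · have hDj0 : Dj = D0 := by rw [hDjdef, hD0def]
    rw [hDj0] at hfinal
    nlinarith
  · have hDj1 : Dj = D1 := by rw [hDjdef, hD1def]
    rw [hDj1] at hfinal
    nlinarith
end
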